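/- Suppose the line-search updates satisfy L_{i+1} = γ₂ γ₁^{p_i} L_i for i = 0,…,k with γ₁ > 1, 0 < γ₂ < 1, L_0 > 0, integers p_i ≥ 0, and L_{k+1} ≤ γ₁ γ₂ L̃ for some L̃ > 0. Then the total oracle count N(k) = Σ_{i=0}^{k} (2 p_i + 2) satisfies N(k) ≤ 2(1 − ln γ₂ / ln γ₁)(k+1) + (2/ln γ₁) ln(γ₁ γ₂ L̃ / L_0). -/

import Mathlib

open Finset in
/-- Bound on the total number of oracle calls of the backtracking line search. -/
theorem oracle_count_bound (k : ℕ) (γ₁ γ₂ L₀ Lt : ℝ) (p : ℕ → ℝ) (L : ℕ → ℝ)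
    (hγ₁ : 1 < γ₁) (hγ₂0 : 0 < γ₂) (hγ₂1 : γ₂ < 1) (hL₀ : 0 < L₀) (hLt : 0 < Lt)
    (hp : ∀ i, 0 ≤ p i) (hL0 : L 0 = L₀)
    (hrec : ∀ i ≤ k, L (i + 1) = γ₂ * γ₁ ^ (p i) * L i)
    (hlast : L (k + 1) ≤ γ₁ * γ₂ * Lt) :
    ∑ i ∈ range (k + 1), (2 * p i + 2) ≤
      2 * (1 - Real.log γ₂ / Real.log γ₁) * (k + 1)
        + (2 / Real.log γ₁) * Real.log (γ₁ * γ₂ * Lt / L₀) := by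
  have hγ₁0 : (0:ℝ) < γ₁ := lt_trans one_pos hγ₁
  have hlogγ₁ : 0 < Real.log γ₁ := Real.log_pos hγ₁
  -- closed form
  have hform : ∀ n, n ≤ k + 1 → L n = L₀ * γ₂ ^ n * γ₁ ^ (∑ i ∈ range n, p i) := by
    intro n
    induction n with
    | zero => intro _; simp [hL0]
    | succ m ih =>
      intro hm
      have hm' : m ≤ k := Nat.lt_succ_iff.mp hm
      rw [hrec m hm', ih (le_trans (Nat.le_succ m) hm), Finset.sum_range_succ,
        Real.rpow_add hγ₁0, pow_succ]
      ring
  have hS : L (k + 1) = L₀ * γ₂ ^ (k + 1) * γ₁ ^ (∑ i ∈ range (k + 1), p i) :=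
    hform (k + 1) le_rfl
  set S := ∑ i ∈ range (k + 1), p i with hSdef
  have hkey : L₀ * γ₂ ^ (k + 1) * γ₁ ^ S ≤ γ₁ * γ₂ * Lt := hS ▸ hlast
  have hpos : (0:ℝ) < L₀ * γ₂ ^ (k + 1) * γ₁ ^ S :=
    mul_pos (mul_pos hL₀ (pow_pos hγ₂0 _)) (Real.rpow_pos_of_pos hγ₁0 _)
  have hlog : Real.log (L₀ * γ₂ ^ (k + 1) * γ₁ ^ S) ≤ Real.log (γ₁ * γ₂ * Lt) :=
    Real.log_le_log hpos hkey
  rw [Real.log_mul (by positivity) (by positivity),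
    Real.log_mul (ne_of_gt hL₀) (by positivity), Real.log_pow,
    Real.log_rpow hγ₁0] at hlog
  -- so S * log γ₁ ≤ log(γ₁γ₂Lt) - log L₀ - (k+1) log γ₂
  have hSbound : S * Real.log γ₁ ≤
      Real.log (γ₁ * γ₂ * Lt) - Real.log L₀ - (k + 1) * Real.log γ₂ := by
    push_cast at hlog ⊢
    linarith
  have hSb : S ≤ (Real.log (γ₁ * γ₂ * Lt) - Real.log L₀ - (k + 1) * Real.log γ₂)
      / Real.log γ₁ := (le_div_iff₀ hlogγ₁).mpr hSbound
  have hsum : ∑ i ∈ range (k + 1), (2 * p i + 2) = 2 * S + 2 * (k + 1) := by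
    rw [Finset.sum_add_distrib, ← Finset.mul_sum]
    simp [hSdef]
    ring
  rw [hsum, Real.log_div (by positivity) (ne_of_gt hL₀)]
  have h2 : 2 * S ≤ 2 * ((Real.log (γ₁ * γ₂ * Lt) - Real.log L₀
      - (k + 1) * Real.log γ₂) / Real.log γ₁) := by linarith
  have hne : Real.log γ₁ ≠ 0 := ne_of_gt hlogγ₁
  field_simp
  nlinarith [hSbound]
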